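/- Let (Γ₁, Γ₂, τ) be a Belavin–Drinfeld triple with Γ₁ ∩ Γ₂ = ∅, J = 1 + (q−q⁻¹)Σ_{α∈Γ̃₁} sign(α,τα) q^{K_{α,τα}} e_{τα}⊗e_{−α}, and for α ∈ Γ̃₁ with β = τα let B_{α,β} denote the coefficient of e_β⊗e_{−α} in J⁻¹ − 1. Define L_{α,β} = ½ if α ⋖ β, −½ if α ⋗ β, and 0 otherwise. Then: (i) if α ≺→ β, B_{α,β} = −(q−q⁻¹)q^{K_{α,β}}; (ii) if α ≺← β, B_{α,β} = −sign(α,β)(q−q⁻¹)q^{|α|−1+L_{α,β}}. -/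

import Mathlib

namespace GGS

open Finset
open scoped Classical

noncomputable section

/-- `n × n` complex matrices, `Mat_n(ℂ)`. -/
abbrev MatN (n : ℕ) := Matrix (Fin n) (Fin n) ℂ
/-- `Mat_n(ℂ) ⊗ Mat_n(ℂ)`, realized as matrices indexed by pairs. -/
abbrev MatT (n : ℕ) := Matrix (Fin n × Fin n) (Fin n × Fin n) ℂ
/-- `Mat_n(ℂ)^{⊗3}`. -/
abbrev MatT3 (n : ℕ) := Matrix (Fin n × Fin n × Fin n) (Fin n × Fin n × Fin n) ℂ

/-- Matrix unit `E_{ij}` (ℕ-indices; `0` if out of range). -/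
def E (n i j : ℕ) : MatN n := fun a b => if (a : ℕ) = i ∧ (b : ℕ) = j then 1 else 0

/-- Tensor (Kronecker) product of two `n × n` matrices. -/
def tens {n : ℕ} (A B : MatN n) : MatT n := fun p q => A p.1 q.1 * B p.2 q.2

/-- `M₂₁` : swap of the two tensor factors. -/
def swap21 {n : ℕ} (M : MatT n) : MatT n := fun p q => M (p.2, p.1) (q.2, q.1)

/-- The permutation (Casimir) element `P = Σ E_{ij} ⊗ E_{ji}`. -/
def Pm (n : ℕ) : MatT n := ∑ i ∈ range n, ∑ j ∈ range n, tens (E n i j) (E n j i)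

/-- `P⁰ = Σ E_{ii} ⊗ E_{ii}`. -/
def P0 (n : ℕ) : MatT n := ∑ i ∈ range n, tens (E n i i) (E n i i)

/-- `M₁₂ = M ⊗ 1`. -/
def lift12 {n : ℕ} (M : MatT n) : MatT3 n :=
  fun p q => M (p.1, p.2.1) (q.1, q.2.1) * (if p.2.2 = q.2.2 then 1 else 0)

/-- `M₁₃`. -/
def lift13 {n : ℕ} (M : MatT n) : MatT3 n :=
  fun p q => M (p.1, p.2.2) (q.1, q.2.2) * (if p.2.1 = q.2.1 then 1 else 0)

/-- `M₂₃ = 1 ⊗ M`. -/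
def lift23 {n : ℕ} (M : MatT n) : MatT3 n :=
  fun p q => M (p.2.1, p.2.2) (q.2.1, q.2.2) * (if p.1 = q.1 then 1 else 0)

/-- The quantum Yang–Baxter equation `R₁₂R₁₃R₂₃ = R₂₃R₁₃R₁₂`. -/
def QYBE {n : ℕ} (M : MatT n) : Prop :=
  lift12 M * lift13 M * lift23 M = lift23 M * lift13 M * lift12 M

/-- The Hecke relation `(PR − q)(PR + q⁻¹) = 0`. -/
def Hecke {n : ℕ} (q : ℝ) (M : MatT n) : Prop :=
  (Pm n * M - (q : ℂ) • (1 : MatT n)) * (Pm n * M + (q : ℂ)⁻¹ • (1 : MatT n)) = 0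

/-- Standard basis vector `e_i` of `ℂⁿ` (as a function on indices). -/
def evec (i : ℕ) : ℕ → ℂ := fun k => if k = i then 1 else 0
/-- The root vector `e_i − e_j`. -/
def rvec (i j : ℕ) : ℕ → ℂ := evec i - evec j
/-- The simple root `α_i = e_i − e_{i+1}` (0-based indexing). -/
def svec (i : ℕ) : ℕ → ℂ := rvec i (i + 1)
/-- The inner product on `ℂⁿ` for which `(e_i)` is orthonormal (restricted to real vectors). -/
def ipn (n : ℕ) (x y : ℕ → ℂ) : ℂ := ∑ k ∈ range n, x k * y k

/-- A Belavin–Drinfeld triple of type `A_{n−1}`; simple roots are indexed `0,…,n−2`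
(0-based: index `i` stands for `α_i = e_i − e_{i+1}`). -/
structure BDTriple (n : ℕ) where
  Γ1 : Finset ℕ
  Γ2 : Finset ℕ
  τ : ℕ → ℕ
  mem1 : ∀ i ∈ Γ1, i + 1 < n
  mem2 : ∀ i ∈ Γ2, i + 1 < n
  bij : Set.BijOn τ ↑Γ1 ↑Γ2
  isometry : ∀ i ∈ Γ1, ∀ j ∈ Γ1, ipn n (svec (τ i)) (svec (τ j)) = ipn n (svec i) (svec j)
  nilp : ∀ i ∈ Γ1, ∃ k ≥ 1, τ^[k] i ∉ Γ1

variable {n : ℕ}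

/-- The positive root `e_i − e_j` (`i < j`) lies in `Γ̃₁` (the positive part of `Span Γ₁`). -/
def SpanRoot (T : BDTriple n) (i j : ℕ) : Prop :=
  i < j ∧ ∀ k, i ≤ k → k < j → k ∈ T.Γ1

/-- `q = τ(p)` for positive roots, via the additive extension of `τ` to `Γ̃₁`. -/
def tauStep (T : BDTriple n) (p q : ℕ × ℕ) : Prop :=
  SpanRoot T p.1 p.2 ∧ q.1 < q.2 ∧ rvec q.1 q.2 = ∑ k ∈ Finset.Ico p.1 p.2, svec (T.τ k)

/-- `q = τᵏ(p)`. -/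
def precK (T : BDTriple n) : ℕ → ℕ × ℕ → ℕ × ℕ → Prop
  | 0, p, q => p = q
  | k + 1, p, q => ∃ r, tauStep T p r ∧ precK T k r q

/-- `p ≺ q`, i.e. `q = τᵏ p` for some `k ≥ 1`. -/
def prec (T : BDTriple n) (p q : ℕ × ℕ) : Prop := ∃ k, precK T (k + 1) p q

/-- `p ≺← q` : `q = τᵏ p` and `τᵏ` reverses orientation on `p`. -/
def RevOri (T : BDTriple n) (p q : ℕ × ℕ) : Prop :=
  ∃ k, precK T (k + 1) p q ∧ T.τ^[k + 1] p.1 = q.2 - 1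

/-- `p ≺→ q` : `q = τᵏ p` and `τᵏ` preserves orientation on `p`. -/
def PresOri (T : BDTriple n) (p q : ℕ × ℕ) : Prop :=
  ∃ k, precK T (k + 1) p q ∧ T.τ^[k + 1] p.1 = q.1

/-- `sign(α,β)` : `(−1)^{1−|α|}` in the orientation-reversing case, `1` otherwise. -/
def sgn (T : BDTriple n) (p q : ℕ × ℕ) : ℂ :=
  if RevOri T p q then (-1 : ℂ) ^ (p.2 - p.1 - 1) else 1

/-- Sum over all pairs of (would-be) positive roots with indices `< n`. -/
def sumRoots (n : ℕ) (f : ℕ × ℕ → ℕ × ℕ → MatT n) : MatT n :=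
  ∑ i ∈ range n, ∑ j ∈ range n, ∑ k ∈ range n, ∑ l ∈ range n, f (i, j) (k, l)

/-- `a = Σ_{α≺β} sign(α,β) (e_{−α} ⊗ e_β − e_β ⊗ e_{−α})`. -/
def aMat (T : BDTriple n) : MatT n :=
  sumRoots n fun p q =>
    if prec T p q then
      sgn T p q • (tens (E n p.2 p.1) (E n q.1 q.2) - tens (E n q.1 q.2) (E n p.2 p.1))
    else 0

/-- `r_s = ½ P⁰ + Σ_{α>0} e_{−α} ⊗ e_α`. -/
def rsMat (n : ℕ) : MatT n :=
  (1 / 2 : ℂ) • P0 n +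
    ∑ i ∈ range n, ∑ j ∈ range n, if i < j then tens (E n j i) (E n i j) else 0

/-- `ε = a r_s + r_s a + a²`. -/
def epsMat (T : BDTriple n) : MatT n :=
  aMat T * rsMat n + rsMat n * aMat T + aMat T * aMat T

/-- Entry of a tensor-square matrix, with ℕ indices. -/
def entry (M : MatT n) (a b c d : ℕ) : ℂ :=
  if h : a < n ∧ b < n ∧ c < n ∧ d < n then
    M (⟨a, h.1⟩, ⟨b, h.2.1⟩) (⟨c, h.2.2.1⟩, ⟨d, h.2.2.2⟩)
  else 0

/-- The coefficient of `e_β ⊗ e_{−α}` in `M` (here `p = α`, `q = β`). -/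
def coeffBA (M : MatT n) (p q : ℕ × ℕ) : ℂ := entry M q.1 p.2 q.2 p.1

/-- `q^z = exp(z · ln q)`. -/
def qpow (q : ℝ) (z : ℂ) : ℂ := Complex.exp (z * (Real.log q : ℂ))

/-- The coefficients `K_{α,β}`. -/
def Kc (T : BDTriple n) (p q : ℕ × ℕ) : ℂ :=
  (if p.2 = q.1 then (1 / 2 : ℂ) else 0) - (if q.2 = p.1 then (1 / 2 : ℂ) else 0)
    + (if ∃ g : ℕ × ℕ, prec T p g ∧ prec T g q ∧ p.2 = g.1 then 1 else 0)
    - (if ∃ g : ℕ × ℕ, prec T p g ∧ prec T g q ∧ g.2 = p.1 then 1 else 0)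
    + (if RevOri T p q then 1 - ((p.2 - p.1 : ℕ) : ℂ) else 0)

/-- `Jⁱ = 1 + (q − q⁻¹) Σ_{β = τⁱα} sign(α,β) q^{K_{α,β}} e_β ⊗ e_{−α}`. -/
def Jlevel (q : ℝ) (T : BDTriple n) (i : ℕ) : MatT n :=
  1 + sumRoots n fun p r =>
    if precK T i p r then
      (((q : ℂ) - (q : ℂ)⁻¹) * sgn T p r * qpow q (Kc T p r)) • tens (E n r.1 r.2) (E n p.2 p.1)
    else 0

/-- `J = J¹ J² ⋯` (levels beyond the maximal power of `τ` contribute the identity). -/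
def Jmat (q : ℝ) (T : BDTriple n) : MatT n :=
  ((List.range n).map fun i => Jlevel q T (i + 1)).prod

/-- The standard Drinfeld–Jimbo `R`-matrix `R_s`. -/
def RsQ (n : ℕ) (q : ℝ) : MatT n :=
  (q : ℂ) • P0 n
    + (∑ i ∈ range n, ∑ j ∈ range n, if i ≠ j then tens (E n i i) (E n j j) else 0)
    + ((q : ℂ) - (q : ℂ)⁻¹) •
        (∑ i ∈ range n, ∑ j ∈ range n, if j < i then tens (E n i j) (E n j i) else 0)

/-- `e_{−α} ∧_c e_β = q^{−c} e_{−α} ⊗ e_β − q^c e_β ⊗ e_{−α}` (`p = α`, `r = β`). -/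
def wedgeC {n : ℕ} (q : ℝ) (c : ℂ) (p r : ℕ × ℕ) : MatT n :=
  qpow q (-c) • tens (E n p.2 p.1) (E n r.1 r.2) - qpow q c • tens (E n r.1 r.2) (E n p.2 p.1)

/-- `R̄_GGS = R_s + (q−q⁻¹) Σ_{α≺β} sign(α,β) e_{−α} ∧_{−sign(α,β) ε_{α,β}} e_β`. -/
def RbarGGS (q : ℝ) (T : BDTriple n) : MatT n :=
  RsQ n q + ((q : ℂ) - (q : ℂ)⁻¹) •
    sumRoots n fun p r =>
      if prec T p r then
        sgn T p r • wedgeC q (-(sgn T p r) * coeffBA (epsMat T) p r) p r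
      else 0

/-- `R̄_J = J⁻¹ R_s J₂₁`. -/
def RbarJ (q : ℝ) (T : BDTriple n) : MatT n :=
  (Jmat q T)⁻¹ * RsQ n q * swap21 (Jmat q T)

/-- `q^{r⁰}` for a diagonal⊗diagonal `r⁰`. -/
def qr0 (n : ℕ) (q : ℝ) (r0 : ℕ → ℕ → ℂ) : MatT n :=
  ∑ i ∈ range n, ∑ j ∈ range n, qpow q (r0 i j) • tens (E n i i) (E n j j)

/-- `R_GGS = q^{r⁰} R̄_GGS q^{r⁰}`. -/
def RGGS (q : ℝ) (T : BDTriple n) (r0 : ℕ → ℕ → ℂ) : MatT n :=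
  qr0 n q r0 * RbarGGS q T * qr0 n q r0

/-- `R_J = q^{r⁰} R̄_J q^{r⁰}`. -/
def RJ (q : ℝ) (T : BDTriple n) (r0 : ℕ → ℕ → ℂ) : MatT n :=
  qr0 n q r0 * RbarJ q T * qr0 n q r0

/-- `r⁰ ∈ 𝔥 ∧ 𝔥`, i.e. the coefficient matrix is antisymmetric. -/
def Antisym (n : ℕ) (r0 : ℕ → ℕ → ℂ) : Prop := ∀ i < n, ∀ j < n, r0 i j = -r0 j i

/-- The Belavin–Drinfeld compatibility equations
`((α − τα) ⊗ 1) r⁰ = ½ ((α + τα) ⊗ 1) P⁰` for all `α ∈ Γ₁`, written componentwise. -/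
def Compat (T : BDTriple n) (r0 : ℕ → ℕ → ℂ) : Prop :=
  ∀ s ∈ T.Γ1, ∀ j < n,
    r0 s j - r0 (s + 1) j - r0 (T.τ s) j + r0 (T.τ s + 1) j
      = (1 / 2 : ℂ) *
        ((if j = s then 1 else 0) - (if j = s + 1 then 1 else 0)
          + (if j = T.τ s then 1 else 0) - (if j = T.τ s + 1 then 1 else 0))

/-- `a₊ⁱ` : the part of `a₊` supported on pairs with `β = τⁱα`. -/
def aPlusLev (T : BDTriple n) (i : ℕ) : MatT n :=
  sumRoots n fun p r =>
    if precK T i p r then (-(sgn T p r)) • tens (E n r.1 r.2) (E n p.2 p.1) else 0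

/-- `a₊ = Σ_{α≺β} (−sign(α,β)) e_β ⊗ e_{−α}`. -/
def aPlus (T : BDTriple n) : MatT n :=
  sumRoots n fun p r =>
    if prec T p r then (-(sgn T p r)) • tens (E n r.1 r.2) (E n p.2 p.1) else 0

/-- `a₋ = Σ_{α≺β} sign(α,β) e_{−α} ⊗ e_β`. -/
def aMinus (T : BDTriple n) : MatT n :=
  sumRoots n fun p r =>
    if prec T p r then sgn T p r • tens (E n p.2 p.1) (E n r.1 r.2) else 0

/-- `P₊ = Σ_{i<j} E_{ij}⊗E_{ji} + ½P⁰`. -/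
def PPlus (n : ℕ) : MatT n :=
  (∑ i ∈ range n, ∑ j ∈ range n, if i < j then tens (E n i j) (E n j i) else 0)
    + (1 / 2 : ℂ) • P0 n

/-- `P₋ = Σ_{i>j} E_{ij}⊗E_{ji} + ½P⁰`. -/
def PMinus (n : ℕ) : MatT n :=
  (∑ i ∈ range n, ∑ j ∈ range n, if j < i then tens (E n i j) (E n j i) else 0)
    + (1 / 2 : ℂ) • P0 n

/-- The matrix `Σ_{i≥j} a₊ⁱa₊ʲ − Σ_{i<j} a₊ⁱa₊ʲ + a₊P₋ + a₋P₊ + P₊a₊ + a₊a₋ − a₋a₊`. -/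
def Mmat (T : BDTriple n) : MatT n :=
  (∑ i ∈ range n, ∑ j ∈ range n, if j ≤ i then aPlusLev T (i + 1) * aPlusLev T (j + 1) else 0)
    - (∑ i ∈ range n, ∑ j ∈ range n, if i < j then aPlusLev T (i + 1) * aPlusLev T (j + 1) else 0)
    + aPlus T * PMinus n + aMinus T * PPlus n + PPlus n * aPlus T
    + aPlus T * aMinus T - aMinus T * aPlus T

/-- `L_{α,β}` : `½` if `α ⋖ β`, `−½` if `α ⋗ β`, `0` otherwise. -/
def Lc (p r : ℕ × ℕ) : ℂ :=
  if p.2 = r.1 then 1 / 2 else if r.2 = p.1 then -(1 / 2) else 0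

/-- The part of `M` (viewed on the basis `e_{τα} ⊗ e_{−α}`, `α ∈ Γ̃₁`) supported on
pairs with `α ⋗ τα`. -/
def partGtr (T : BDTriple n) (M : MatT n) : MatT n :=
  sumRoots n fun p r =>
    if tauStep T p r ∧ r.2 = p.1 then coeffBA M p r • tens (E n r.1 r.2) (E n p.2 p.1) else 0

/-- The part of `M` (viewed on the basis `e_{−α} ⊗ e_{τα}`, `α ∈ Γ̃₁`) supported on
pairs with `α ⋖ τα`. -/
def partLess21 (T : BDTriple n) (M : MatT n) : MatT n :=
  sumRoots n fun p r =>
    if tauStep T p r ∧ p.2 = r.1 then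
      entry M p.2 r.1 p.1 r.2 • tens (E n p.2 p.1) (E n r.1 r.2)
    else 0



section Aux
variable {n : ℕ} (T : BDTriple n)

lemma qpow_add (q : ℝ) (z w : ℂ) : qpow q (z + w) = qpow q z * qpow q w := by
  simp [qpow, add_mul, Complex.exp_add]

lemma qpow_zero (q : ℝ) : qpow q 0 = 1 := by simp [qpow]

lemma qpow_one (q : ℝ) (hq : 0 < q) : qpow q 1 = (q : ℂ) := by
  simp [qpow]
  rw [← Complex.ofReal_exp, Real.exp_log hq]

lemma qpow_neg_one (q : ℝ) (hq : 0 < q) : qpow q (-1) = (q : ℂ)⁻¹ := by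
  have : qpow q (-1) * qpow q 1 = 1 := by rw [← qpow_add]; simp [qpow_zero]
  rw [qpow_one q hq] at this
  exact eq_inv_of_mul_eq_one_left this

lemma qpow_mul_A (q : ℝ) (hq : 0 < q) (z : ℂ) :
    ((q:ℂ) - (q:ℂ)⁻¹) * qpow q z = qpow q (z+1) - qpow q (z-1) := by
  rw [qpow_add, show z - 1 = z + (-1) by ring, qpow_add, qpow_one q hq, qpow_neg_one q hq]
  ring

lemma telescope (q : ℝ) (hq : 0 < q) (i : ℕ) :
    qpow q (-(i:ℂ)) + ((q:ℂ) - (q:ℂ)⁻¹) *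
      (∑ e ∈ range i, qpow q (2*((e:ℂ)+1) - (i:ℂ) - 1)) = qpow q (i:ℂ) := by
  have h : ∀ e : ℕ, ((q:ℂ) - (q:ℂ)⁻¹) * qpow q (2*((e:ℂ)+1) - (i:ℂ) - 1)
      = qpow q (2*(((e+1):ℕ):ℂ) - (i:ℂ)) - qpow q (2*((e:ℕ):ℂ) - (i:ℂ)) := by
    intro e
    rw [qpow_mul_A q hq]
    push_cast
    ring_nf
  rw [Finset.mul_sum]
  rw [Finset.sum_congr rfl (fun e _ => h e), Finset.sum_range_sub (fun e : ℕ => qpow q (2*((e:ℕ):ℂ) - (i:ℂ)))]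
  push_cast
  ring_nf

lemma sum_evec_mul (n i : ℕ) (hi : i < n) (y : ℕ → ℂ) :
    ∑ k ∈ range n, evec i k * y k = y i := by
  rw [show (fun k => evec i k * y k) = fun k => if k = i then y i else 0 by
    funext k; simp [evec]; split_ifs with h <;> simp [h]]
  simp [Finset.sum_ite_eq' (range n) i, hi]

lemma ipn_rvec (n i j : ℕ) (hi : i < n) (hj : j < n) (y : ℕ → ℂ) :
    ipn n (rvec i j) y = y i - y j := by
  unfold ipn rvec
  simp only [Pi.sub_apply, sub_mul, Finset.sum_sub_distrib]
  rw [sum_evec_mul n i hi, sum_evec_mul n j hj]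

lemma ipn_svec (n i j : ℕ) (hi : i + 1 < n) (hj : j + 1 < n) :
    ipn n (svec i) (svec j) =
      if i = j then 2 else if i + 1 = j ∨ j + 1 = i then -1 else 0 := by
  unfold svec
  rw [ipn_rvec n i (i+1) (by omega) hi]
  unfold rvec evec
  simp only [Pi.sub_apply]
  split_ifs <;> first
    | (exfalso; omega)
    | norm_num

lemma tau_mem2 {i : ℕ} (hi : i ∈ T.Γ1) : T.τ i ∈ T.Γ2 := T.bij.mapsTo hi

lemma tau_lt {i : ℕ} (hi : i ∈ T.Γ1) : T.τ i + 1 < n := T.mem2 _ (tau_mem2 T hi)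

lemma tau_inj {i j : ℕ} (hi : i ∈ T.Γ1) (hj : j ∈ T.Γ1) (h : T.τ i = T.τ j) : i = j :=
  T.bij.injOn hi hj h

lemma iso_vals {i j : ℕ} (hi : i ∈ T.Γ1) (hj : j ∈ T.Γ1) :
    (if T.τ i = T.τ j then (2:ℂ) else if T.τ i + 1 = T.τ j ∨ T.τ j + 1 = T.τ i then -1 else 0)
    = (if i = j then (2:ℂ) else if i + 1 = j ∨ j + 1 = i then -1 else 0) := by
  rw [← ipn_svec n (T.τ i) (T.τ j) (tau_lt T hi) (tau_lt T hj),
    ← ipn_svec n i j (T.mem1 _ hi) (T.mem1 _ hj)]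
  exact T.isometry i hi j hj

lemma tau_adj {i j : ℕ} (hi : i ∈ T.Γ1) (hj : j ∈ T.Γ1) (h : i + 1 = j) :
    T.τ i + 1 = T.τ j ∨ T.τ j + 1 = T.τ i := by
  have hv := iso_vals T hi hj
  rw [if_neg (show ¬i = j by omega), if_pos (Or.inl h)] at hv
  by_contra hc
  rw [if_neg hc] at hv
  split_ifs at hv <;> norm_num at hv

lemma tau_far {i j : ℕ} (hi : i ∈ T.Γ1) (hj : j ∈ T.Γ1) (h : i + 2 ≤ j) :
    ¬(T.τ i = T.τ j ∨ T.τ i + 1 = T.τ j ∨ T.τ j + 1 = T.τ i) := by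
  have hv := iso_vals T hi hj
  rw [if_neg (show ¬i = j by omega), if_neg (show ¬(i + 1 = j ∨ j + 1 = i) by omega)] at hv
  intro hc
  rcases hc with hc | hc
  · rw [if_pos hc] at hv; norm_num at hv
  · rw [if_neg (show ¬T.τ i = T.τ j by omega), if_pos hc] at hv; norm_num at hv

lemma tau_mono {a b : ℕ} (hab : a < b) (hΓ : ∀ k, a ≤ k → k < b → k ∈ T.Γ1) :
    (∀ i, a + i < b → T.τ (a + i) = T.τ a + i) ∨
    ((a + 2 ≤ b) ∧ ∀ i, a + i < b → T.τ (a + i) + i = T.τ a) := by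
  by_cases hb : b ≤ a + 1
  · left; intro i hi
    have : i = 0 := by omega
    simp [this]
  · have h2 : a + 2 ≤ b := by omega
    have mem : ∀ i, a + i < b → a + i ∈ T.Γ1 := fun i hi => hΓ _ (by omega) hi
    have key : ∀ i, a + i < b → (T.τ (a+1) = T.τ a + 1 → T.τ (a + i) = T.τ a + i) ∧
        (T.τ (a+1) + 1 = T.τ a → T.τ (a + i) + i = T.τ a) := by
      intro i
      induction i using Nat.strong_induction_on with
      | _ i IH =>
        intro hi
        match i with
        | 0 => exact ⟨fun _ => by simp, fun _ => by simp⟩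
        | 1 => exact ⟨fun h => h, fun h => h⟩
        | (j+2) =>
          have e1 := IH (j+1) (by omega) (by omega)
          have e0 := IH j (by omega) (by omega)
          have hadj := tau_adj T (mem (j+1) (by omega))
            (show a + (j+1) + 1 ∈ T.Γ1 by
              have := mem (j+2) hi
              rwa [show a + (j+2) = a + (j+1) + 1 by omega] at this) rfl
          rw [show a + (j+1) + 1 = a + (j+2) by omega] at hadj
          have hfar := tau_far T (mem j (by omega))
            (show a + (j+2) ∈ T.Γ1 by exact mem (j+2) hi) (by omega)
          constructor
          · intro hasc
            have q1 := e1.1 hasc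
            have q0 := e0.1 hasc
            omega
          · intro hdesc
            have q1 := e1.2 hdesc
            have q0 := e0.2 hdesc
            omega
    rcases tau_adj T (mem 0 (by omega)) (show a + 0 + 1 ∈ T.Γ1 by simpa using mem 1 (by omega)) rfl
      with hasc | hdesc
    · left; intro i hi; exact (key i hi).1 (by simpa using hasc.symm)
    · right; exact ⟨h2, fun i hi => (key i hi).2 (by simpa using hdesc)⟩

lemma rvec_cancel (u x y : ℕ) : rvec u x + rvec x y = rvec u y := by
  unfold rvec; abel

lemma rvec_apply (i j k : ℕ) :
    rvec i j k = (if k = i then (1:ℂ) else 0) - (if k = j then 1 else 0) := rfl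

lemma rvec_inj {u v u' v' : ℕ} (h : u < v) (h' : u' < v') (he : rvec u v = rvec u' v') :
    u = u' ∧ v = v' := by
  have h1 := congrFun he u
  have h2 := congrFun he v
  rw [rvec_apply, rvec_apply] at h1 h2
  rw [if_pos rfl, if_neg (by omega)] at h1
  rw [if_neg (by omega), if_pos rfl] at h2
  constructor
  · by_contra hc
    rw [if_neg (fun hh => hc hh), ] at h1
    split_ifs at h1 <;> norm_num at h1
  · by_contra hc
    rw [if_neg (fun hh => hc hh)] at h2
    split_ifs at h2 <;> norm_num at h2

lemma sum_svec_asc (f : ℕ → ℕ) (l : ℕ) :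
    ∀ e, (∀ i, i ≤ e → f (l + i) = f l + i) →
      ∑ k ∈ Finset.Ico l (l + e + 1), svec (f k) = rvec (f l) (f (l + e) + 1) := by
  intro e
  induction e with
  | zero => intro _; simp [svec]
  | succ e IH =>
    intro hf
    rw [show l + (e+1) + 1 = (l + e + 1) + 1 by omega,
      Finset.sum_Ico_succ_top (by omega)]
    rw [IH (fun i hi => hf i (by omega))]
    rw [show l + e + 1 = l + (e+1) by omega]
    have h1 : f (l + (e+1)) = f (l + e) + 1 := by
      have := hf (e+1) le_rfl; have := hf e (by omega); omega
    rw [h1]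
    exact rvec_cancel _ _ _

lemma sum_svec_desc (f : ℕ → ℕ) (l : ℕ) :
    ∀ e, (∀ i, i ≤ e → f (l + i) + i = f l) →
      ∑ k ∈ Finset.Ico l (l + e + 1), svec (f k) = rvec (f (l + e)) (f l + 1) := by
  intro e
  induction e with
  | zero => intro _; simp [svec]
  | succ e IH =>
    intro hf
    rw [show l + (e+1) + 1 = (l + e + 1) + 1 by omega,
      Finset.sum_Ico_succ_top (by omega)]
    rw [IH (fun i hi => hf i (by omega))]
    rw [show l + e + 1 = l + (e+1) by omega]
    have h1 : f (l + (e+1)) + 1 = f (l + e) := by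
      have := hf (e+1) le_rfl; have := hf e (by omega); omega
    unfold svec
    rw [h1, add_comm]
    exact rvec_cancel _ _ _

lemma tauStep_unique {p r r' : ℕ × ℕ} (h : tauStep T p r) (h' : tauStep T p r') : r = r' := by
  obtain ⟨_, hlt, he⟩ := h
  obtain ⟨_, hlt', he'⟩ := h'
  have := rvec_inj hlt hlt' (he.trans he'.symm)
  exact Prod.ext this.1 this.2

lemma tauStep_image {p r : ℕ × ℕ} (hstep : tauStep T p r) :
    ∃ m, p.2 = p.1 + m + 1 ∧
      ((∀ i, i ≤ m → T.τ (p.1 + i) = T.τ p.1 + i) ∧ r = (T.τ p.1, T.τ (p.1 + m) + 1)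
       ∨ (1 ≤ m ∧ (∀ i, i ≤ m → T.τ (p.1 + i) + i = T.τ p.1)
            ∧ r = (T.τ (p.1 + m), T.τ p.1 + 1))) := by
  obtain ⟨⟨hab, hΓ⟩, hlt, he⟩ := hstep
  refine ⟨p.2 - p.1 - 1, by omega, ?_⟩
  set a := p.1
  set m := p.2 - a - 1 with hm
  have hb : p.2 = a + m + 1 := by omega
  rcases tau_mono T hab hΓ with hasc | ⟨h2, hdesc⟩
  · left
    have hf : ∀ i, i ≤ m → T.τ (a + i) = T.τ a + i := fun i hi => hasc i (by omega)
    refine ⟨hf, ?_⟩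
    rw [hb, sum_svec_asc T.τ a m hf] at he
    have := rvec_inj hlt (by have := hf m le_rfl; omega) he
    exact Prod.ext this.1 this.2
  · right
    have hf : ∀ i, i ≤ m → T.τ (a + i) + i = T.τ a := fun i hi => hdesc i (by omega)
    refine ⟨by omega, hf, ?_⟩
    rw [hb, sum_svec_desc T.τ a m hf] at he
    have := rvec_inj hlt (by have := hf m le_rfl; omega) he
    exact Prod.ext this.1 this.2

lemma tauStep_image_mem2 {p r : ℕ × ℕ} (hstep : tauStep T p r) :
    ∀ j, r.1 ≤ j → j < r.2 → j ∈ T.Γ2 := by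
  intro j hj1 hj2
  obtain ⟨⟨hab, hΓ⟩, hlt, he⟩ := hstep
  obtain ⟨m, hb, himg⟩ := tauStep_image T ⟨⟨hab, hΓ⟩, hlt, he⟩
  have mem : ∀ i, i ≤ m → p.1 + i ∈ T.Γ1 := fun i hi => hΓ _ (by omega) (by omega)
  rcases himg with ⟨hf, hr⟩ | ⟨_, hf, hr⟩
  · have h0 := hf m le_rfl
    rw [hr] at hj1 hj2
    simp only at hj1 hj2
    refine (show T.τ (p.1 + (j - T.τ p.1)) = j by have := hf (j - T.τ p.1) (by omega); omega) ▸
      tau_mem2 T (mem _ (by omega))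
  · have h0 := hf m le_rfl
    rw [hr] at hj1 hj2
    simp only at hj1 hj2
    refine (show T.τ (p.1 + (T.τ p.1 - j)) = j by have := hf (T.τ p.1 - j) (by omega); omega) ▸
      tau_mem2 T (mem _ (by omega))

variable (hdisj : T.Γ1 ∩ T.Γ2 = ∅)
include hdisj

lemma not_mem_both {i : ℕ} (h1 : i ∈ T.Γ1) (h2 : i ∈ T.Γ2) : False := by
  have : i ∈ T.Γ1 ∩ T.Γ2 := Finset.mem_inter.2 ⟨h1, h2⟩
  rw [hdisj] at this; exact absurd this (Finset.notMem_empty i)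

lemma no_step_from_image {p r r' : ℕ × ℕ} (h : tauStep T p r) (h' : tauStep T r r') : False := by
  have h2 : r.1 ∈ T.Γ2 := tauStep_image_mem2 T h r.1 le_rfl h'.1.1
  exact not_mem_both T hdisj (h'.1.2 r.1 le_rfl h'.1.1) h2

omit hdisj in

lemma precK_one_iff {p r : ℕ × ℕ} : precK T 1 p r ↔ tauStep T p r :=
  ⟨fun ⟨g, h1, h2⟩ => by rwa [show g = r from h2] at h1, fun h => ⟨r, h, rfl⟩⟩

omit hdisj in

lemma precK_first {k : ℕ} {p r : ℕ × ℕ} (h : precK T (k+1) p r) : ∃ g, tauStep T p g := by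
  obtain ⟨g, h1, _⟩ := h; exact ⟨g, h1⟩

lemma precK_two_false {k : ℕ} {p r : ℕ × ℕ} (h : precK T (k+2) p r) : False := by
  obtain ⟨g, h1, h2⟩ := h
  obtain ⟨g', h3⟩ := precK_first T h2
  exact no_step_from_image T hdisj h1 h3

lemma prec_iff {p r : ℕ × ℕ} : prec T p r ↔ tauStep T p r := by
  constructor
  · rintro ⟨k, hk⟩
    match k with
    | 0 => exact (precK_one_iff T).1 hk
    | (j+1) => exact absurd hk (fun h => precK_two_false T hdisj h)
  · intro h; exact ⟨0, (precK_one_iff T).2 h⟩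

lemma RevOri_iff {p r : ℕ × ℕ} : RevOri T p r ↔ tauStep T p r ∧ T.τ p.1 + 1 = r.2 := by
  constructor
  · rintro ⟨k, hk, he⟩
    match k with
    | 0 =>
      have hts := (precK_one_iff T).1 hk
      have : r.1 < r.2 := hts.2.1
      rw [Function.iterate_one] at he
      exact ⟨hts, by omega⟩
    | (j+1) => exact absurd hk (fun h => precK_two_false T hdisj h)
  · rintro ⟨hts, he⟩
    exact ⟨0, (precK_one_iff T).2 hts, by rw [Function.iterate_one]; omega⟩

lemma PresOri_iff {p r : ℕ × ℕ} : PresOri T p r ↔ tauStep T p r ∧ T.τ p.1 = r.1 := by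
  constructor
  · rintro ⟨k, hk, he⟩
    match k with
    | 0 => exact ⟨(precK_one_iff T).1 hk, by rwa [Function.iterate_one] at he⟩
    | (j+1) => exact absurd hk (fun h => precK_two_false T hdisj h)
  · rintro ⟨hts, he⟩
    exact ⟨0, (precK_one_iff T).2 hts, by rwa [Function.iterate_one]⟩

lemma Kc_simp {p r : ℕ × ℕ} :
    Kc T p r = (if p.2 = r.1 then (1 / 2 : ℂ) else 0)
      - (if r.2 = p.1 then (1 / 2 : ℂ) else 0)
      + (if RevOri T p r then 1 - ((p.2 - p.1 : ℕ) : ℂ) else 0) := by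
  have hmid : ∀ P : (ℕ × ℕ) → Prop, ¬ ∃ g : ℕ × ℕ, prec T p g ∧ prec T g r ∧ P g := by
    rintro P ⟨g, h1, h2, _⟩
    exact no_step_from_image T hdisj ((prec_iff T hdisj).1 h1) ((prec_iff T hdisj).1 h2)
  unfold Kc
  rw [if_neg (hmid _), if_neg (hmid _)]
  ring

omit hdisj
end Aux


section Aux2
variable {n : ℕ}

lemma sumRoots_if_apply (P : ℕ × ℕ → ℕ × ℕ → Prop) (c : ℕ × ℕ → ℕ × ℕ → ℂ)
    (A B C D : Fin n) :
    (sumRoots n fun p r => if P p r then c p r • tens (E n r.1 r.2) (E n p.2 p.1) else 0)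
        (A, B) (C, D)
    = if P ((D:ℕ), (B:ℕ)) ((A:ℕ), (C:ℕ)) then c ((D:ℕ), (B:ℕ)) ((A:ℕ), (C:ℕ)) else 0 := by
  unfold sumRoots
  have hterm : ∀ i j k l : ℕ,
      ((if P (i,j) (k,l) then c (i,j) (k,l) • tens (E n k l) (E n j i) else (0 : MatT n))
        (A, B) (C, D))
      = if (C:ℕ) = l then (if (A:ℕ) = k then (if (B:ℕ) = j then (if (D:ℕ) = i then
          (if P (i,j) (k,l) then c (i,j) (k,l) else 0) else 0) else 0) else 0) else 0 := by
    intro i j k l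
    by_cases hP : P (i,j) (k,l)
    · rw [if_pos hP, if_pos hP]
      simp only [Matrix.smul_apply, tens, E, smul_eq_mul]
      split_ifs <;> simp_all <;> ring
    · rw [if_neg hP, if_neg hP]
      simp only [Matrix.zero_apply]
      split_ifs <;> rfl
  simp only [Matrix.sum_apply, hterm]
  simp only [Finset.sum_ite_eq, Finset.mem_range, Fin.is_lt, if_true]

/-- the coefficient in `J` -/
def XC (q : ℝ) (T : BDTriple n) (p r : ℕ × ℕ) : ℂ :=
  ((q : ℂ) - (q : ℂ)⁻¹) * sgn T p r * qpow q (Kc T p r)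

/-- the nilpotent part of `J` as an explicit matrix -/
def Xmat (q : ℝ) (T : BDTriple n) : MatT n := fun P Q =>
  if tauStep T ((Q.2 : ℕ), (P.2 : ℕ)) ((P.1 : ℕ), (Q.1 : ℕ))
  then XC q T ((Q.2 : ℕ), (P.2 : ℕ)) ((P.1 : ℕ), (Q.1 : ℕ)) else 0

lemma Jlevel_one (q : ℝ) (T : BDTriple n) : Jlevel q T 1 = 1 + Xmat q T := by
  unfold Jlevel
  congr 1
  ext ⟨A, B⟩ ⟨C, D⟩
  rw [sumRoots_if_apply]
  unfold Xmat XC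
  by_cases h : tauStep T ((D:ℕ), (B:ℕ)) ((A:ℕ), (C:ℕ))
  · rw [if_pos ((precK_one_iff T).2 h), if_pos h]
  · rw [if_neg (fun hh => h ((precK_one_iff T).1 hh)), if_neg h]

lemma Jlevel_ge2 (q : ℝ) (T : BDTriple n) (hdisj : T.Γ1 ∩ T.Γ2 = ∅) (k : ℕ) :
    Jlevel q T (k + 2) = 1 := by
  unfold Jlevel
  have : (sumRoots n fun p r =>
      if precK T (k+2) p r then
        ((((q:ℂ) - (q:ℂ)⁻¹) * sgn T p r * qpow q (Kc T p r))) • tens (E n r.1 r.2) (E n p.2 p.1)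
      else 0) = 0 := by
    ext ⟨A, B⟩ ⟨C, D⟩
    rw [sumRoots_if_apply]
    rw [if_neg (fun hh => precK_two_false T hdisj hh)]
    rfl
  rw [this, add_zero]

lemma Jmat_eq (q : ℝ) (T : BDTriple n) (hdisj : T.Γ1 ∩ T.Γ2 = ∅) (hn : 1 ≤ n) :
    Jmat q T = 1 + Xmat q T := by
  unfold Jmat
  obtain ⟨m, rfl⟩ : ∃ m, n = m + 1 := ⟨n - 1, by omega⟩
  rw [List.range_succ_eq_map]
  simp only [List.map_cons, List.prod_cons, List.map_map]
  rw [Jlevel_one]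
  have : ((List.range m).map ((fun i => Jlevel q T (i + 1)) ∘ Nat.succ)).prod = 1 := by
    apply List.prod_eq_one
    intro x hx
    obtain ⟨i, _, rfl⟩ := List.mem_map.1 hx
    exact Jlevel_ge2 q T hdisj i
  rw [this, mul_one]

lemma Xmat_zero (q : ℝ) (T : BDTriple n) {P Q : Fin n × Fin n}
    (h : ¬ ((Q.2 : ℕ) < (P.2 : ℕ))) : Xmat q T P Q = 0 := by
  unfold Xmat
  rw [if_neg]
  intro hts
  exact h hts.1.1

lemma pow_tri (Z : MatT n) (hZ : ∀ P Q, ¬((Q.2:ℕ) < (P.2:ℕ)) → Z P Q = 0) :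
    ∀ m (P Q : Fin n × Fin n), ((P.2:ℕ) < (Q.2:ℕ) + m) → (Z ^ m) P Q = 0 := by
  intro m
  induction m with
  | zero =>
    intro P Q h
    rw [pow_zero]
    exact Matrix.one_apply_ne (fun he => by rw [he] at h; omega)
  | succ m IH =>
    intro P Q h
    rw [pow_succ', Matrix.mul_apply]
    apply Finset.sum_eq_zero
    intro R _
    by_cases hR : (R.2:ℕ) < (P.2:ℕ)
    · rw [IH R Q (by omega), mul_zero]
    · rw [hZ P R hR, zero_mul]

/-- the inverse of `J` -/
def Ymat (q : ℝ) (T : BDTriple n) : MatT n := ∑ m ∈ range n, (-(Xmat q T)) ^ m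

lemma negX_tri (q : ℝ) (T : BDTriple n) :
    ∀ (P Q : Fin n × Fin n), ¬((Q.2:ℕ) < (P.2:ℕ)) → (-(Xmat q T)) P Q = 0 := by
  intro P Q h
  rw [Matrix.neg_apply, Xmat_zero q T h, neg_zero]

lemma Ymat_low (q : ℝ) (T : BDTriple n) {P Q : Fin n × Fin n}
    (h : (P.2:ℕ) < (Q.2:ℕ)) : Ymat q T P Q = 0 := by
  unfold Ymat
  rw [Matrix.sum_apply]
  apply Finset.sum_eq_zero
  intro m _
  exact pow_tri _ (negX_tri q T) m P Q (by omega)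

lemma Ymat_diag (q : ℝ) (T : BDTriple n) (P : Fin n × Fin n) : Ymat q T P P = 1 := by
  unfold Ymat
  rw [Matrix.sum_apply]
  rw [Finset.sum_eq_single 0]
  · simp [Matrix.one_apply]
  · intro m _ hm
    exact pow_tri _ (negX_tri q T) m P P (by omega)
  · intro h
    exact absurd (Finset.mem_range.2 P.1.pos) h

lemma negX_pow_n (q : ℝ) (T : BDTriple n) : (-(Xmat q T)) ^ n = 0 := by
  ext P Q
  rw [Matrix.zero_apply]
  exact pow_tri _ (negX_tri q T) n P Q (by have := P.2.isLt; omega)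

lemma Ymat_mul_J (q : ℝ) (T : BDTriple n) : Ymat q T * (1 + Xmat q T) = 1 := by
  have h1 : (1 : MatT n) + Xmat q T = -((-(Xmat q T)) - 1) := by abel
  rw [h1, mul_neg, Ymat, geom_sum_mul, negX_pow_n]
  simp

lemma J_mul_Ymat (q : ℝ) (T : BDTriple n) : (1 + Xmat q T) * Ymat q T = 1 := by
  have h1 : (1 : MatT n) + Xmat q T = -((-(Xmat q T)) - 1) := by abel
  rw [h1, neg_mul, Ymat, mul_geom_sum, negX_pow_n]
  simp

lemma Jmat_inv (q : ℝ) (T : BDTriple n) (hdisj : T.Γ1 ∩ T.Γ2 = ∅) (hn : 1 ≤ n) :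
    (Jmat q T)⁻¹ = Ymat q T := by
  rw [Jmat_eq q T hdisj hn]
  exact Matrix.inv_eq_left_inv (Ymat_mul_J q T)

lemma Ymat_rec (q : ℝ) (T : BDTriple n) (P Q : Fin n × Fin n) :
    Ymat q T P Q = (1 : MatT n) P Q - ∑ R : Fin n × Fin n, Xmat q T P R * Ymat q T R Q := by
  have h := J_mul_Ymat q T
  rw [add_mul, one_mul] at h
  have h2 : Ymat q T = 1 - Xmat q T * Ymat q T := by
    rw [← h]; abel
  conv_lhs => rw [h2]
  rw [Matrix.sub_apply, Matrix.mul_apply]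

end Aux2


section Aux3
variable {n : ℕ}

lemma piece_desc (T : BDTriple n) (a m : ℕ)
    (hΓ : ∀ k, a ≤ k → k < a + m + 1 → k ∈ T.Γ1)
    (hdesc : ∀ i, i ≤ m → T.τ (a + i) + i = T.τ a) :
    ∀ j i, j ≤ i → i ≤ m → tauStep T (a+j, a+i+1) (T.τ (a+i), T.τ (a+j) + 1) := by
  intro j i hji him
  have hsum := sum_svec_desc T.τ (a+j) (i-j) (by
    intro t ht
    have e1 := hdesc (j+t) (by omega)
    have e2 := hdesc j (by omega)
    rw [show a + j + t = a + (j + t) by omega]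
    omega)
  rw [show a + j + (i-j) = a + i by omega] at hsum
  refine ⟨⟨by omega, fun k hk1 hk2 => hΓ k (by omega) (by omega)⟩, ?_, ?_⟩
  · have e1 := hdesc i him
    have e2 := hdesc j (by omega)
    simp only
    omega
  · exact hsum.symm

lemma tauStep_full_asc (T : BDTriple n) (a m : ℕ)
    (hΓ : ∀ k, a ≤ k → k < a + m + 1 → k ∈ T.Γ1)
    (hasc : ∀ i, i ≤ m → T.τ (a + i) = T.τ a + i) :
    tauStep T (a, a+m+1) (T.τ a, T.τ (a+m) + 1) := by
  refine ⟨⟨by omega, fun k hk1 hk2 => hΓ k (by omega) (by omega)⟩, ?_, ?_⟩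
  · have := hasc m le_rfl
    simp only
    omega
  · exact (sum_svec_asc T.τ a m (fun i hi => hasc i hi)).symm

lemma asc_main (q : ℝ) (T : BDTriple n) (hdisj : T.Γ1 ∩ T.Γ2 = ∅) (a m : ℕ)
    (hΓ : ∀ k, a ≤ k → k < a + m + 1 → k ∈ T.Γ1)
    (hasc : ∀ i, i ≤ m → T.τ (a + i) = T.τ a + i)
    (K L K' L' : Fin n) (hK : (K:ℕ) = T.τ a) (hL : (L:ℕ) = a+m+1)
    (hK' : (K':ℕ) = T.τ (a+m) + 1) (hL' : (L':ℕ) = a) :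
    Ymat q T (K, L) (K', L') = - XC q T (a, a+m+1) (T.τ a, T.τ (a+m) + 1) := by
  have hstep0 := tauStep_full_asc T a m hΓ hasc
  have haΓ : a ∈ T.Γ1 := hΓ a le_rfl (by omega)
  rw [Ymat_rec]
  rw [Matrix.one_apply_ne (by
    intro hc
    have := congrArg (fun z : Fin n × Fin n => (z.2 : ℕ)) hc
    simp only [hL, hL'] at this
    omega)]
  have hR : ∀ R : Fin n × Fin n, Xmat q T (K, L) R * Ymat q T R (K', L')
      = if R = (K', L') then XC q T (a, a+m+1) (T.τ a, T.τ (a+m) + 1) else 0 := by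
    rintro ⟨k, l⟩
    by_cases hla : (l:ℕ) < a
    · rw [Ymat_low q T (by simp only [hL']; exact hla), mul_zero, if_neg (by
        intro hc
        have := congrArg (fun z : Fin n × Fin n => (z.2 : ℕ)) hc
        simp only [hL'] at this
        omega)]
    · by_cases hX : tauStep T ((l:ℕ), (L:ℕ)) ((K:ℕ), (k:ℕ))
      · obtain ⟨m', hb', himg⟩ := tauStep_image T hX
        simp only at hb' himg
        rw [hL] at hb'
        have hlm : (l:ℕ) + m' = a + m := by omega
        have hlΓ : (l:ℕ) ∈ T.Γ1 := hΓ _ (by omega) (by omega)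
        rcases himg with ⟨hf, hr'⟩ | ⟨hm'1, hf, hr'⟩
        · have h1 : T.τ (l:ℕ) = T.τ a := by
            have := congrArg Prod.fst hr'
            simp only at this
            rw [← this, hK]
          have hla' : (l:ℕ) = a := tau_inj T hlΓ haΓ h1
          have hk' : (k:ℕ) = T.τ (a+m) + 1 := by
            have := congrArg Prod.snd hr'
            simp only at this
            rw [this, show (l:ℕ) + m' = a + m from hlm]
          have hReq : ((k,l) : Fin n × Fin n) = (K', L') := by
            rw [Prod.ext_iff]
            exact ⟨Fin.ext (by rw [hk', hK']), Fin.ext (by rw [hla', hL'])⟩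
          rw [hReq, if_pos rfl, Ymat_diag, mul_one]
          show (if tauStep T ((L':ℕ), (L:ℕ)) ((K:ℕ), (K':ℕ)) then
            XC q T ((L':ℕ), (L:ℕ)) ((K:ℕ), (K':ℕ)) else 0) = _
          rw [hL', hL, hK, hK']
          rw [if_pos hstep0]
        · exfalso
          have h1 : T.τ ((l:ℕ) + m') = T.τ a := by
            have := congrArg Prod.fst hr'
            simp only at this
            rw [← this, hK]
          have := tau_inj T (hΓ _ (by omega) (by omega)) haΓ h1
          omega
      · rw [show Xmat q T (K, L) (k, l) = 0 from if_neg hX, zero_mul, if_neg (by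
          intro hc
          apply hX
          have h1 := congrArg (fun z : Fin n × Fin n => (z.1 : ℕ)) hc
          have h2 := congrArg (fun z : Fin n × Fin n => (z.2 : ℕ)) hc
          simp only at h1 h2
          rw [h1, h2, hK', hL', hK, hL]
          exact hstep0)]
  rw [Finset.sum_congr rfl (fun R _ => hR R), Finset.sum_ite_eq' Finset.univ ((K', L') : Fin n × Fin n)]
  simp

end Aux3


section Aux4
variable {n : ℕ}

lemma desc_main (q : ℝ) (hq : 0 < q) (T : BDTriple n) (hdisj : T.Γ1 ∩ T.Γ2 = ∅)
    (a m : ℕ) (hΓ : ∀ k, a ≤ k → k < a + m + 1 → k ∈ T.Γ1)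
    (hdesc : ∀ i, i ≤ m → T.τ (a + i) + i = T.τ a) :
    ∀ i, i ≤ m → ∀ (K L K' L' : Fin n), (K:ℕ) = T.τ (a+i) → (L:ℕ) = a+i+1 →
      (K':ℕ) = T.τ a + 1 → (L':ℕ) = a →
      Ymat q T (K, L) (K', L') =
        (-1)^(i+1) * ((q:ℂ) - (q:ℂ)⁻¹) *
          qpow q ((i:ℂ) + (if a+i+1 = T.τ (a+i) then (1/2:ℂ) else 0)
            - (if T.τ a + 1 = a then (1/2:ℂ) else 0)) := by
  intro i
  induction i using Nat.strong_induction_on with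
  | _ i IH =>
    intro him K L K' L' hK hL hK' hL'
    have hmem : ∀ j, j ≤ m → a + j ∈ T.Γ1 := fun j hj => hΓ _ (by omega) (by omega)
    have hτlt : ∀ j, j ≤ m → T.τ (a+j) + 1 < n := fun j hj => tau_lt T (hmem j hj)
    have hbn : a + m + 1 + 1 ≤ n := T.mem1 _ (hmem m le_rfl)
    have hpiece : ∀ j, j ≤ i → tauStep T (a+j, a+i+1) (T.τ (a+i), T.τ (a+j) + 1) :=
      fun j hj => piece_desc T a m hΓ hdesc j i hj him
    -- notation
    set A : ℂ := ((q:ℂ) - (q:ℂ)⁻¹) with hA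
    set D0 : ℂ := (if T.τ a + 1 = a then (1/2:ℂ) else 0) with hD0
    set G : ℕ → ℂ := fun e =>
      XC q T (a+e, a+i+1) (T.τ (a+i), T.τ (a+e) + 1) *
        (if e = 0 then 1 else
          (-1)^e * A * qpow q (((e-1:ℕ):ℂ) + (if a+(e-1)+1 = T.τ (a+(e-1)) then (1/2:ℂ) else 0) - D0))
      with hG
    -- the XC values
    have hXCval : ∀ e, e ≤ i → XC q T (a+e, a+i+1) (T.τ (a+i), T.τ (a+e) + 1)
        = A * (-1)^(i-e) * qpow q ((if a+i+1 = T.τ (a+i) then (1/2:ℂ) else 0)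
            - (if T.τ (a+e) + 1 = a+e then (1/2:ℂ) else 0) - ((i-e:ℕ):ℂ)) := by
      intro e he
      have hrev : RevOri T (a+e, a+i+1) (T.τ (a+i), T.τ (a+e) + 1) :=
        (RevOri_iff T hdisj).2 ⟨hpiece e he, rfl⟩
      unfold XC sgn
      rw [Kc_simp T hdisj, if_pos hrev, if_pos hrev]
      simp only
      rw [show (a+i+1) - (a+e) - 1 = i - e by omega, show ((a+i+1) - (a+e)) = (i-e)+1 by omega]
      rw [mul_assoc, mul_assoc]
      congr 2
      congr 1
      push_cast
      ring
    -- row-by-row evaluation of the recursion sum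
    rw [Ymat_rec]
    rw [Matrix.one_apply_ne (by
      intro hc
      have := congrArg (fun z : Fin n × Fin n => (z.2 : ℕ)) hc
      simp only [hL, hL'] at this
      omega)]
    rw [Fintype.sum_prod_type_right]
    have hl : ∀ l : Fin n, (∑ k : Fin n, Xmat q T (K, L) (k, l) * Ymat q T (k, l) (K', L'))
        = if a ≤ (l:ℕ) ∧ (l:ℕ) < a+i+1 then G ((l:ℕ) - a) else 0 := by
      intro l
      by_cases hla : (l:ℕ) < a
      · rw [if_neg (by omega)]
        apply Finset.sum_eq_zero
        intro k _
        rw [Ymat_low q T (by simp only [hL']; exact hla), mul_zero]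
      · by_cases hlb : a + i < (l:ℕ)
        · rw [if_neg (by omega)]
          apply Finset.sum_eq_zero
          intro k _
          have hz : Xmat q T (K, L) (k, l) = 0 := by
            apply if_neg
            intro hts
            have := hts.1.1
            simp only [hL] at this
            omega
          rw [hz, zero_mul]
        · rw [if_pos (by omega)]
          set e := (l:ℕ) - a with he
          have hle : (l:ℕ) = a + e := by omega
          have hei : e ≤ i := by omega
          set k0 : Fin n := ⟨T.τ (a+e) + 1, hτlt e (by omega)⟩ with hk0
          rw [Finset.sum_eq_single k0]
          rotate_left
          · intro k _ hk
            have hz : Xmat q T (K, L) (k, l) = 0 := by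
              apply if_neg
              intro hts
              have hts2 : tauStep T (a+e, a+i+1) (T.τ (a+i), (k:ℕ)) := by
                rw [← hle, ← hL, ← hK]
                exact hts
              have := tauStep_unique T hts2 (hpiece e hei)
              exact hk (Fin.ext (by
                have := congrArg Prod.snd this
                simpa using this))
            rw [hz, zero_mul]
          · intro h; exact absurd (Finset.mem_univ k0) h
          · have hXpos : Xmat q T (K, L) (k0, l)
                = XC q T (a+e, a+i+1) (T.τ (a+i), T.τ (a+e) + 1) := by
              show (if tauStep T ((l:ℕ), (L:ℕ)) ((K:ℕ), (k0:ℕ)) then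
                XC q T ((l:ℕ), (L:ℕ)) ((K:ℕ), (k0:ℕ)) else 0) = _
              rw [hle, hL, hK, show (k0:ℕ) = T.τ (a+e) + 1 from rfl]
              rw [if_pos (hpiece e hei)]
            rw [hXpos]
            by_cases he0 : e = 0
            · have hReq : ((k0, l) : Fin n × Fin n) = (K', L') := by
                rw [Prod.ext_iff]
                refine ⟨Fin.ext ?_, Fin.ext ?_⟩
                · show T.τ (a+e) + 1 = (K':ℕ)
                  rw [hK', he0]; norm_num
                · rw [hle, hL', he0]; norm_num
              rw [hReq, Ymat_diag, hG]
              simp [he0]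
            · have hIH := IH (e-1) (by omega) (by omega) k0 l K' L'
                (by
                  show T.τ (a+e) + 1 = T.τ (a+(e-1))
                  have d1 := hdesc e (by omega)
                  have d2 := hdesc (e-1) (by omega)
                  omega)
                (by omega) hK' hL'
              rw [hIH, hG]
              simp only [if_neg he0]
              rw [show e - 1 + 1 = e by omega]
      -- end hl
    rw [Finset.sum_congr rfl (fun l _ => hl l)]
    rw [Fin.sum_univ_eq_sum_range (fun l => if a ≤ l ∧ l < a+i+1 then G (l - a) else 0) n]
    rw [← Finset.sum_filter]
    rw [show (range n).filter (fun l => a ≤ l ∧ l < a+i+1) = Finset.Ico a (a+i+1) by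
      ext x
      simp only [Finset.mem_filter, Finset.mem_range, Finset.mem_Ico]
      constructor
      · rintro ⟨_, h2⟩; exact h2
      · intro h; exact ⟨by omega, h⟩]
    rw [Finset.sum_Ico_eq_sum_range]
    rw [show a + i + 1 - a = i + 1 by omega]
    simp only [show ∀ x : ℕ, a + x - a = x from fun x => by omega]
    rw [Finset.sum_range_succ']
    -- scalar computation
    have hG0 : G 0 = A * (-1)^i * (qpow q ((if a+i+1 = T.τ (a+i) then (1/2:ℂ) else 0) - D0)
        * qpow q (-(i:ℂ))) := by
      have h0 : G 0 = XC q T (a+0, a+i+1) (T.τ (a+i), T.τ (a+0) + 1) := by simp [hG]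
      rw [h0, hXCval 0 (by omega)]
      simp only [Nat.add_zero, Nat.sub_zero]
      rw [← hD0, ← qpow_add]
      congr 2 <;> (try push_cast) <;> (try ring)
    have hGe : ∀ e, e < i → G (e+1) =
        ((-1)^i * (A * A) * qpow q ((if a+i+1 = T.τ (a+i) then (1/2:ℂ) else 0) - D0))
          * qpow q (2*((e:ℂ)+1) - (i:ℂ) - 1) := by
      intro e he
      rw [hG]
      simp only [if_neg (Nat.succ_ne_zero e), Nat.add_sub_cancel]
      rw [hXCval (e+1) (by omega)]
      have hcond : (if T.τ (a+(e+1)) + 1 = a+(e+1) then (1/2:ℂ) else 0)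
          = (if a+e+1 = T.τ (a+e) then (1/2:ℂ) else 0) := by
        have d1 := hdesc (e+1) (by omega)
        have d2 := hdesc e (by omega)
        simp only [show (T.τ (a+(e+1)) + 1 = a+(e+1)) ↔ (a+e+1 = T.τ (a+e)) from
          by constructor <;> intro <;> omega]
      rw [hcond]
      have hq12 : qpow q ((if a+i+1 = T.τ (a+i) then (1/2:ℂ) else 0)
            - (if a+e+1 = T.τ (a+e) then (1/2:ℂ) else 0) - ((i-(e+1):ℕ):ℂ))
          * qpow q (((e:ℕ):ℂ) + (if a+e+1 = T.τ (a+e) then (1/2:ℂ) else 0) - D0)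
          = qpow q ((if a+i+1 = T.τ (a+i) then (1/2:ℂ) else 0) - D0)
            * qpow q (2*((e:ℂ)+1) - (i:ℂ) - 1) := by
        rw [← qpow_add, ← qpow_add]
        congr 1
        rw [Nat.cast_sub (by omega : e+1 ≤ i)]
        push_cast
        ring
      have hsgn : ((-1:ℂ))^(i-(e+1)) * (-1)^(e+1) = (-1)^i := by
        rw [← pow_add, show i-(e+1)+(e+1) = i by omega]
      calc A * (-1)^(i-(e+1)) * qpow q ((if a+i+1 = T.τ (a+i) then (1/2:ℂ) else 0)
            - (if a+e+1 = T.τ (a+e) then (1/2:ℂ) else 0) - ((i-(e+1):ℕ):ℂ))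
          * ((-1)^(e+1) * A * qpow q (((e:ℕ):ℂ) + (if a+e+1 = T.τ (a+e) then (1/2:ℂ) else 0) - D0))
          = (((-1:ℂ))^(i-(e+1)) * (-1)^(e+1)) * (A * A) *
            (qpow q ((if a+i+1 = T.τ (a+i) then (1/2:ℂ) else 0)
              - (if a+e+1 = T.τ (a+e) then (1/2:ℂ) else 0) - ((i-(e+1):ℕ):ℂ))
            * qpow q (((e:ℕ):ℂ) + (if a+e+1 = T.τ (a+e) then (1/2:ℂ) else 0) - D0)) := by
            ring
        _ = _ := by rw [hq12, hsgn]; ring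
    rw [Finset.sum_congr rfl (fun e he => hGe e (Finset.mem_range.1 he)), hG0]
    rw [← Finset.mul_sum]
    have ht := telescope q hq i
    have hfin : qpow q ((i:ℂ) + (if a+i+1 = T.τ (a+i) then (1/2:ℂ) else 0) - D0)
        = qpow q ((if a+i+1 = T.τ (a+i) then (1/2:ℂ) else 0) - D0) * qpow q ((i:ℕ):ℂ) := by
      rw [← qpow_add]; congr 1; push_cast; ring
    rw [hfin]
    set S := ∑ e ∈ range i, qpow q (2*((e:ℂ)+1) - (i:ℂ) - 1) with hS
    set X1 := qpow q ((if a+i+1 = T.τ (a+i) then (1/2:ℂ) else 0) - D0) with hX1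
    have ht' : qpow q (-(i:ℂ)) + A * S = qpow q ((i:ℕ):ℂ) := ht
    linear_combination (-((-1:ℂ))^i * A * X1) * ht'

end Aux4

/-- in the disjoint case, the coefficients `B_{α,τα}` of `J⁻¹ − 1`:
`B_{α,β} = −(q−q⁻¹)q^{K_{α,β}}` when `τ` preserves orientation, and
`B_{α,β} = −sign(α,β)(q−q⁻¹)q^{|α|−1+L_{α,β}}` when it reverses orientation. -/
theorem stmt_11 {n : ℕ} (hn : 2 ≤ n) (q : ℝ) (hq : 0 < q) (hq1 : q ≠ 1)
    (T : BDTriple n) (hdisj : T.Γ1 ∩ T.Γ2 = ∅)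
    (p r : ℕ × ℕ) (hstep : tauStep T p r) :
    (PresOri T p r →
      coeffBA ((Jmat q T)⁻¹ - 1) p r = -(((q : ℂ) - (q : ℂ)⁻¹) * qpow q (Kc T p r))) ∧
    (RevOri T p r →
      coeffBA ((Jmat q T)⁻¹ - 1) p r
        = -(sgn T p r) * ((q : ℂ) - (q : ℂ)⁻¹) *
            qpow q (((p.2 - p.1 : ℕ) : ℂ) - 1 + Lc p r)) := by
  obtain ⟨pa, pb⟩ := p
  obtain ⟨r1, r2⟩ := r
  obtain ⟨m, hb, himg⟩ := tauStep_image T hstep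
  simp only at hb
  subst hb
  have hΓ : ∀ k, pa ≤ k → k < pa + m + 1 → k ∈ T.Γ1 := fun k h1 h2 => hstep.1.2 k h1 h2
  have hmem : ∀ j, j ≤ m → pa + j ∈ T.Γ1 := fun j hj => hΓ _ (by omega) (by omega)
  have haΓ : pa ∈ T.Γ1 := by simpa using hmem 0 (by omega)
  have hbn : pa + m + 1 < n := by have := T.mem1 _ (hmem m le_rfl); omega
  have hn1 : (1:ℕ) ≤ n := by omega
  have hτm : T.τ (pa + m) + 1 < n := tau_lt T (hmem m le_rfl)
  have hτa : T.τ pa + 1 < n := tau_lt T haΓ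
  rcases himg with ⟨hasc, hr⟩ | ⟨hm1, hdesc, hr⟩
  · -- ascending case
    simp only [Prod.mk.injEq] at hr
    obtain ⟨hr1, hr2⟩ := hr
    subst hr1; subst hr2
    have hne : ((⟨T.τ pa, by omega⟩, ⟨pa+m+1, by omega⟩) : Fin n × Fin n)
        ≠ ((⟨T.τ (pa+m) + 1, by omega⟩, ⟨pa, by omega⟩) : Fin n × Fin n) := by
      intro hc
      have := congrArg (fun z : Fin n × Fin n => (z.2 : ℕ)) hc
      simp only at this
      omega
    have hcoeff : coeffBA ((Jmat q T)⁻¹ - 1) (pa, pa+m+1) (T.τ pa, T.τ (pa+m) + 1)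
        = - XC q T (pa, pa+m+1) (T.τ pa, T.τ (pa+m) + 1) := by
      rw [Jmat_inv q T hdisj hn1]
      unfold coeffBA entry
      rw [dif_pos (show T.τ pa < n ∧ pa+m+1 < n ∧ T.τ (pa+m) + 1 < n ∧ pa < n by
        refine ⟨by omega, by omega, by omega, by omega⟩)]
      rw [Matrix.sub_apply, Matrix.one_apply_ne hne, sub_zero]
      exact asc_main q T hdisj pa m hΓ hasc _ _ _ _ rfl rfl rfl rfl
    rw [hcoeff]
    constructor
    · intro _
      unfold XC
      have hsgn : sgn T (pa, pa+m+1) (T.τ pa, T.τ (pa+m) + 1) = 1 := by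
        unfold sgn
        split_ifs with h
        · obtain ⟨hts, he⟩ := (RevOri_iff T hdisj).1 h
          simp only at he
          have hmm := tau_inj T haΓ (hmem m le_rfl) (by omega)
          rw [show pa+m+1-pa-1 = m by omega, show m = 0 by omega, pow_zero]
        · rfl
      rw [hsgn]; ring
    · intro hrev
      obtain ⟨hts, he⟩ := (RevOri_iff T hdisj).1 hrev
      simp only at he
      have hm0 : m = 0 := by
        have := tau_inj T haΓ (hmem m le_rfl) (by omega : T.τ pa = T.τ (pa+m)); omega
      subst hm0
      unfold XC
      rw [Kc_simp T hdisj, if_pos hrev]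
      unfold Lc
      have harg : (if (pa, pa+0+1).2 = (T.τ pa, T.τ (pa+0) + 1).1 then (1/2:ℂ) else 0)
            - (if (T.τ pa, T.τ (pa+0) + 1).2 = (pa, pa+0+1).1 then (1/2:ℂ) else 0)
            + (1 - (((pa, pa+0+1).2 - (pa, pa+0+1).1 : ℕ) : ℂ))
          = (((pa, pa+0+1).2 - (pa, pa+0+1).1 : ℕ) : ℂ) - 1 +
            (if (pa, pa+0+1).2 = (T.τ pa, T.τ (pa+0) + 1).1 then (1/2:ℂ)
             else if (T.τ pa, T.τ (pa+0) + 1).2 = (pa, pa+0+1).1 then -(1/2) else 0) := by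
        simp only [Nat.add_zero]
        rw [show pa+1-pa = 1 by omega]
        split_ifs <;> first | (exfalso; omega) | (push_cast; ring)
      rw [harg]
      ring
  · -- descending case
    simp only [Prod.mk.injEq] at hr
    obtain ⟨hr1, hr2⟩ := hr
    subst hr1; subst hr2
    have hrev : RevOri T (pa, pa+m+1) (T.τ (pa+m), T.τ pa + 1) :=
      (RevOri_iff T hdisj).2 ⟨hstep, rfl⟩
    constructor
    · intro hpres
      exfalso
      obtain ⟨_, he⟩ := (PresOri_iff T hdisj).1 hpres
      simp only at he
      have := tau_inj T haΓ (hmem m le_rfl) he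
      omega
    · intro _
      have hne : ((⟨T.τ (pa+m), by omega⟩, ⟨pa+m+1, by omega⟩) : Fin n × Fin n)
          ≠ ((⟨T.τ pa + 1, by omega⟩, ⟨pa, by omega⟩) : Fin n × Fin n) := by
        intro hc
        have := congrArg (fun z : Fin n × Fin n => (z.2 : ℕ)) hc
        simp only at this
        omega
      have hcoeff : coeffBA ((Jmat q T)⁻¹ - 1) (pa, pa+m+1) (T.τ (pa+m), T.τ pa + 1)
          = (-1)^(m+1) * ((q:ℂ) - (q:ℂ)⁻¹) *
              qpow q ((m:ℂ) + (if pa+m+1 = T.τ (pa+m) then (1/2:ℂ) else 0)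
                - (if T.τ pa + 1 = pa then (1/2:ℂ) else 0)) := by
        rw [Jmat_inv q T hdisj hn1]
        unfold coeffBA entry
        rw [dif_pos (show T.τ (pa+m) < n ∧ pa+m+1 < n ∧ T.τ pa + 1 < n ∧ pa < n by
          refine ⟨by omega, by omega, by omega, by omega⟩)]
        rw [Matrix.sub_apply, Matrix.one_apply_ne hne, sub_zero]
        exact desc_main q hq T hdisj pa m hΓ hdesc m le_rfl _ _ _ _ rfl rfl rfl rfl
      rw [hcoeff]
      unfold sgn
      rw [if_pos hrev]
      simp only
      rw [show pa+m+1-pa-1 = m by omega]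
      unfold Lc
      have hd : T.τ (pa+m) + m = T.τ pa := hdesc m le_rfl
      have harg : (((pa+m+1) - pa : ℕ) : ℂ) - 1 +
            (if (pa, pa+m+1).2 = (T.τ (pa+m), T.τ pa + 1).1 then (1/2:ℂ)
             else if (T.τ (pa+m), T.τ pa + 1).2 = (pa, pa+m+1).1 then -(1/2) else 0)
          = (m:ℂ) + (if pa+m+1 = T.τ (pa+m) then (1/2:ℂ) else 0)
            - (if T.τ pa + 1 = pa then (1/2:ℂ) else 0) := by
        simp only
        rw [show pa+m+1-pa = m+1 by omega]
        split_ifs <;> first | (exfalso; omega) | (push_cast; ring)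
      rw [harg]
      ring

end
end GGS
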